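/- Let (X,d) be a compact metric space, f : X → X with Lipschitz constant at most M on a subset avoiding a set, and let ν be a measure with ‖ν‖_∞ ≤ 1 (bounded density). If νₙ := (fⁿ)_*ν is supported where f⁻ⁿ has C¹-norm at most Mⁿ, then ‖νₙ‖_∞ ≤ M^{4n}. Consequently, for functions vₙ with uniformly bounded DSH norms, |⟨νₙ, vₙ⟩| ≤ C(1 + 4n log⁺ M) = O(n). -/

import Mathlib

open MeasureTheory

/-- Lipschitz maps on `ℂ × ℂ ≅ ℝ⁴` expand Lebesgue measure by at most `K ^ 4`. -/
lemma volume_image_le_aux (K : NNReal) {g : ℂ × ℂ → ℂ × ℂ} (hg : LipschitzWith K g)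
    (s : Set (ℂ × ℂ)) : volume (g '' s) ≤ (K : ENNReal) ^ (4 : ℝ) * volume s := by
  have h4 : ((Module.finrank ℝ (ℂ × ℂ) : ℕ) : ℝ) = (4 : ℝ) := by
    rw [Module.finrank_prod, Complex.finrank_real_complex]; norm_num
  have hHaar : (μH[(4 : ℝ)] : Measure (ℂ × ℂ)).IsAddHaarMeasure := by
    rw [← h4]; infer_instance
  haveI : (volume : Measure (ℂ × ℂ)).IsAddHaarMeasure :=
    show ((volume : Measure ℂ).prod (volume : Measure ℂ)).IsAddHaarMeasure from inferInstance
  have hvol : (volume : Measure (ℂ × ℂ)) =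
      Measure.addHaarScalarFactor (volume : Measure (ℂ × ℂ)) (μH[(4 : ℝ)]) • μH[(4 : ℝ)] :=
    Measure.isAddLeftInvariant_eq_smul _ _
  have himg := hg.hausdorffMeasure_image_le (by norm_num : (0:ℝ) ≤ 4) s
  set c := Measure.addHaarScalarFactor (volume : Measure (ℂ × ℂ)) (μH[(4 : ℝ)]) with hc
  have happ : ∀ t : Set (ℂ × ℂ), volume t = (c : ENNReal) * (μH[(4 : ℝ)] : Measure (ℂ × ℂ)) t := by
    intro t
    rw [hvol]
    rw [Measure.smul_apply, ENNReal.smul_def, smul_eq_mul]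
  calc volume (g '' s) = (c : ENNReal) * (μH[(4 : ℝ)] : Measure (ℂ × ℂ)) (g '' s) := happ _
    _ ≤ (c : ENNReal) * ((K : ENNReal) ^ (4 : ℝ) * (μH[(4 : ℝ)] : Measure (ℂ × ℂ)) s) :=
        mul_le_mul_right himg _
    _ = (K : ENNReal) ^ (4 : ℝ) * ((c : ENNReal) * (μH[(4 : ℝ)] : Measure (ℂ × ℂ)) s) := by ring
    _ = (K : ENNReal) ^ (4 : ℝ) * volume s := by rw [← happ]

/-- Push-forward density estimate: if `ν₀` has density bounded by `1` with respect to
Lebesgue measure on `ℂ² ≅ ℝ⁴`, and `νₙ(s) = ν₀(gₙ(s))` where `gₙ` (playing the role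
of `f⁻ⁿ`) is Lipschitz with constant `Mⁿ`, then `νₙ` has density bounded by `M^{4n}`.
Consequently, for functions `vₙ` with uniformly bounded DSH norms (i.e. satisfying the
exponential estimate of Corollary 3.13 against measures of bounded density),
`|⟨νₙ, vₙ⟩| ≤ C (1 + 4 n log⁺ M) = O(n)`. -/
theorem pushforward_density_estimate (M : ℝ) (hM : 1 ≤ M)
    (g : ℕ → (ℂ × ℂ) → (ℂ × ℂ))
    (hg : ∀ n, LipschitzWith (Real.toNNReal (M ^ n)) (g n))
    (ν₀ : Measure (ℂ × ℂ)) (hν₀ : ∀ s : Set (ℂ × ℂ), ν₀ s ≤ volume s)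
    (ν : ℕ → Measure (ℂ × ℂ))
    (hν : ∀ n, ∀ s : Set (ℂ × ℂ), ν n s = ν₀ (g n '' s))
    (C : ℝ) (hC : 0 < C) (v : ℕ → (ℂ × ℂ) → ℝ)
    (hDSH : ∀ n, ∀ σ : Measure (ℂ × ℂ), ∀ K : ℝ, 1 ≤ K →
      (∀ s : Set (ℂ × ℂ), σ s ≤ ENNReal.ofReal K * volume s) →
      |∫ x, v n x ∂σ| ≤ C * (1 + max (Real.log K) 0)) :
    (∀ n, ∀ s : Set (ℂ × ℂ), ν n s ≤ ENNReal.ofReal (M ^ (4 * n)) * volume s) ∧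
    ∀ n : ℕ, |∫ x, v n x ∂(ν n)| ≤ C * (1 + 4 * n * max (Real.log M) 0) := by
  have hM0 : (0:ℝ) < M := lt_of_lt_of_le one_pos hM
  have hMn : ∀ n : ℕ, (0:ℝ) ≤ M ^ n := fun n => (pow_pos hM0 n).le
  have key : ∀ n, ∀ s : Set (ℂ × ℂ), ν n s ≤ ENNReal.ofReal (M ^ (4 * n)) * volume s := by
    intro n s
    have h1 : ν n s ≤ volume (g n '' s) := (hν n s).le.trans (hν₀ _)
    have h2 := volume_image_le_aux _ (hg n) s
    refine h1.trans (h2.trans (le_of_eq ?_))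
    congr 1
    have hcoe : ((Real.toNNReal (M ^ n) : NNReal) : ENNReal) = ENNReal.ofReal (M ^ n) := rfl
    rw [hcoe, ENNReal.ofReal_rpow_of_pos (pow_pos hM0 n)]
    congr 1
    rw [show (4 : ℝ) = ((4 : ℕ) : ℝ) by norm_num, Real.rpow_natCast, ← pow_mul]
    ring_nf
  refine ⟨key, fun n => ?_⟩
  have hK1 : (1:ℝ) ≤ M ^ (4 * n) := one_le_pow₀ hM
  have := hDSH n (ν n) (M ^ (4 * n)) hK1 (key n)
  refine this.trans (le_of_eq ?_)
  congr 1
  rw [Real.log_pow]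
  have hlog : 0 ≤ Real.log M := Real.log_nonneg hM
  rw [max_eq_left (by positivity), max_eq_left hlog]
  push_cast; ring
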